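/- Let d be a natural number and let P(x) = \sum_{k=0}^{d} c_k x^k be a polynomial with integer coefficients. Let Q(y) = P(1-y) = \sum_{k=0}^{d} c'_k y^k be the polynomial obtained by the change of variable x = 1-y. Suppose that for some j \in \{0,\dots,d\} we have c'_j \neq 0 and c'_i = 0 for all i < j. Then Q has no real zero in the open interval (0, 1/(2 H(P) \binom{d+1}{j+2})). -/

import Mathlib

open Polynomial Finset

lemma aux_natAbs_sum {s : Finset ℕ} (f : ℕ → ℤ) :
    (∑ e ∈ s, f e).natAbs ≤ ∑ e ∈ s, (f e).natAbs := by
  classical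
  induction s using Finset.induction with
  | empty => simp
  | insert _ _ h ih =>
    rw [Finset.sum_insert h, Finset.sum_insert h]
    exact (Int.natAbs_add_le _ _).trans (by omega)

lemma aux_coeff_pow (k i : ℕ) : ((((1:Polynomial ℤ) - X)^k).coeff i).natAbs = k.choose i := by
  have h : ((1:Polynomial ℤ) - X) = -(X + C (-1)) := by
    rw [map_neg, Polynomial.C_1]; ring
  rw [h, neg_pow, show ((-1 : Polynomial ℤ))^k = Polynomial.C ((-1)^k) by simp,
    Polynomial.coeff_C_mul, Polynomial.coeff_X_add_C_pow]
  simp [Int.natAbs_mul, Int.natAbs_pow]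

lemma aux_Qcoeff (d : ℕ) (P : Polynomial ℤ) (hPd : P.natDegree ≤ d) (i : ℕ) :
    ((P.comp (1 - X)).coeff i).natAbs ≤
      ((Finset.range (d+1)).sup fun k => (P.coeff k).natAbs) * (d+1).choose (i+1) := by
  set H := (Finset.range (d+1)).sup fun k => (P.coeff k).natAbs with hH
  have hsum : ∑ e ∈ Finset.range (d+1), Nat.choose e i = (d+1).choose (i+1) := by
    rw [← Nat.sum_Icc_choose, Finset.range_eq_Ico]
    refine (Finset.sum_subset ?_ ?_).symm
    · intro x hx; simp only [Finset.mem_Icc, Finset.mem_Ico] at *; omega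
    · intro x hx hx'
      simp only [Finset.mem_Icc, Finset.mem_Ico] at *
      exact Nat.choose_eq_zero_of_lt (by omega)
  conv_lhs => rw [P.as_sum_range' (d+1) (by omega)]
  rw [Polynomial.sum_comp, Polynomial.finset_sum_coeff]
  simp only [Polynomial.monomial_comp, Polynomial.coeff_C_mul]
  calc (∑ e ∈ Finset.range (d+1), P.coeff e * (((1:Polynomial ℤ) - X)^e).coeff i).natAbs
      ≤ ∑ e ∈ Finset.range (d+1), (P.coeff e * (((1:Polynomial ℤ) - X)^e).coeff i).natAbs := by
        exact aux_natAbs_sum _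
  _ ≤ ∑ e ∈ Finset.range (d+1), H * Nat.choose e i := by
        refine Finset.sum_le_sum fun e he => ?_
        rw [Int.natAbs_mul, aux_coeff_pow]
        exact Nat.mul_le_mul_right _ (hH ▸ Finset.le_sup (f := fun k => (P.coeff k).natAbs) he)
  _ = H * (d+1).choose (i+1) := by rw [← Finset.mul_sum, hsum]

lemma aux_le_choose : ∀ n k : ℕ, 1 ≤ k → k < n → n ≤ n.choose k := by
  intro n
  induction n with
  | zero => intro k h1 h2; omega
  | succ n ih =>
    intro k hk1 hkn
    rcases eq_or_lt_of_le (Nat.lt_succ_iff.mp hkn) with he | hlt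
    · subst he; rw [Nat.choose_succ_self_right]
    · obtain ⟨m, rfl⟩ : ∃ m, k = m + 1 := ⟨k - 1, by omega⟩
      rw [Nat.choose_succ_succ]
      have h1 : n ≤ n.choose (m + 1) := ih (m + 1) hk1 hlt
      have h2 : 0 < n.choose m := Nat.choose_pos (by omega)
      simp only [Nat.succ_eq_add_one] at *
      omega

lemma aux_choose_step (n s : ℕ) : n.choose (s+1) ≤ n.choose s * n :=
  calc n.choose (s+1) ≤ n.choose (s+1) * (s+1) := Nat.le_mul_of_pos_right _ (by omega)
  _ = n.choose s * (n - s) := Nat.choose_succ_right_eq n s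
  _ ≤ n.choose s * n := Nat.mul_le_mul_left _ (Nat.sub_le n s)

lemma aux_choose_mul (n k : ℕ) : ∀ m : ℕ, n.choose (k + m) ≤ n.choose k * n ^ m := by
  intro m
  induction m with
  | zero => simp
  | succ m ih =>
    calc n.choose (k + (m+1)) = n.choose ((k+m)+1) := by ring_nf
    _ ≤ n.choose (k+m) * n := aux_choose_step n (k+m)
    _ ≤ n.choose k * n ^ m * n := Nat.mul_le_mul_right n ih
    _ = n.choose k * n ^ (m+1) := by ring


/-- If `Q(y) = P(1-y)` where `P` has integer coefficients and degree at most `d`,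
and the coefficients of `Q` of index `< j` vanish while the `j`-th does not, then `Q` has no
real zero in the open interval `(0, 1/(2 H(P) binom(d+1, j+2)))`, where `H(P)` is the height
of `P` (the maximum absolute value of its coefficients). -/
theorem stmt_0 (d : ℕ) (P : Polynomial ℤ) (hPd : P.natDegree ≤ d)
    (Q : Polynomial ℤ) (hQ : Q = P.comp (1 - Polynomial.X))
    (j : ℕ) (hjd : j ≤ d)
    (hcj : Q.coeff j ≠ 0) (hlow : ∀ i, i < j → Q.coeff i = 0) :
    ∀ y : ℝ, 0 < y →
      y < 1 / (2 * ((((Finset.range (d + 1)).sup fun k => (P.coeff k).natAbs) : ℕ) : ℝ) *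
        ((d + 1).choose (j + 2) : ℝ)) →
      Polynomial.aeval y Q ≠ 0 := by
  intro y hy0 hy hzero
  set H : ℕ := (Finset.range (d+1)).sup fun k => (P.coeff k).natAbs with hH
  set Cn : ℕ := (d+1).choose (j+2) with hCn
  -- H ≥ 1
  have hP0 : P ≠ 0 := by
    rintro rfl
    simp at hQ
    exact hcj (by simp [hQ])
  have hH1 : 1 ≤ H := by
    have h1 : P.natDegree ∈ Finset.range (d+1) := Finset.mem_range.mpr (by omega)
    have h2 : 1 ≤ (P.coeff P.natDegree).natAbs :=
      Int.natAbs_pos.mpr (Polynomial.leadingCoeff_ne_zero.mpr hP0)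
    exact le_trans h2 (hH ▸ Finset.le_sup (f := fun k => (P.coeff k).natAbs) h1)
  -- Cn ≥ 1
  have hj2 : j + 2 ≤ d + 1 := by
    by_contra h
    have h0 : (Cn:ℝ) = 0 := by
      rw [hCn, Nat.choose_eq_zero_of_lt (show d + 1 < j + 2 by omega)]
      norm_num
    rw [h0] at hy
    norm_num at hy
    linarith
  have hCn1 : 1 ≤ Cn := hCn ▸ Nat.choose_pos hj2
  have hD : (0:ℝ) < 2 * (H:ℝ) * (Cn:ℝ) := by
    have : (0:ℝ) < (H:ℝ) := by exact_mod_cast hH1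
    have : (0:ℝ) < (Cn:ℝ) := by exact_mod_cast hCn1
    positivity
  have hyD : 2 * (H:ℝ) * (Cn:ℝ) * y < 1 := by
    have := (lt_div_iff₀ hD).mp hy
    linarith
  -- degree bound
  have hQd : Q.natDegree ≤ d := by
    rw [hQ, Polynomial.natDegree_comp]
    have h1 : ((1:Polynomial ℤ) - X).natDegree = 1 := by
      rw [show ((1:Polynomial ℤ) - X) = -(X - Polynomial.C 1) by rw [Polynomial.C_1]; ring,
        Polynomial.natDegree_neg, Polynomial.natDegree_X_sub_C]
    rw [h1, mul_one]; exact hPd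
  -- evaluate as a sum
  have heval : ∑ i ∈ Finset.range (d+1), (Q.coeff i : ℝ) * y^i = 0 := by
    rw [← hzero, Polynomial.aeval_eq_sum_range' (Nat.lt_succ_of_le hQd)]
    simp [zsmul_eq_mul]
  have h1 : ∑ i ∈ Finset.Ico j (d+1), (Q.coeff i : ℝ) * y^i = 0 := by
    rw [← heval]
    apply Finset.sum_subset
    · intro x hx; simp only [Finset.mem_Ico, Finset.mem_range] at *; omega
    · intro x hx hx'
      simp only [Finset.mem_Ico, Finset.mem_range] at *
      rw [hlow x (by omega)]
      simp
  have h2 : (Q.coeff j : ℝ) * y^j = - ∑ i ∈ Finset.Ico (j+1) (d+1), (Q.coeff i : ℝ) * y^i := by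
    have hins : Finset.Ico j (d+1) = insert j (Finset.Ico (j+1) (d+1)) :=
      (Finset.insert_Ico_add_one_left_eq_Ico (by omega)).symm
    rw [hins, Finset.sum_insert (by simp)] at h1
    linarith
  -- lower bound on |c_j|
  have h1cj : (1:ℝ) ≤ |(Q.coeff j : ℝ)| := by
    rw [← Int.cast_abs]
    exact_mod_cast Int.one_le_abs (by exact_mod_cast hcj)
  have h4 : y^j ≤ ∑ i ∈ Finset.Ico (j+1) (d+1), |(Q.coeff i : ℝ)| * y^i := by
    calc y^j = 1 * y^j := (one_mul _).symm
    _ ≤ |(Q.coeff j : ℝ)| * y^j := by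
        exact mul_le_mul_of_nonneg_right h1cj (le_of_lt (pow_pos hy0 j))
    _ = |(Q.coeff j : ℝ) * y^j| := by
        rw [abs_mul, abs_of_pos (pow_pos hy0 j)]
    _ = |∑ i ∈ Finset.Ico (j+1) (d+1), (Q.coeff i : ℝ) * y^i| := by rw [h2, abs_neg]
    _ ≤ ∑ i ∈ Finset.Ico (j+1) (d+1), |(Q.coeff i : ℝ) * y^i| :=
        Finset.abs_sum_le_sum_abs _ _
    _ = ∑ i ∈ Finset.Ico (j+1) (d+1), |(Q.coeff i : ℝ)| * y^i := by
        refine Finset.sum_congr rfl fun i _ => ?_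
        rw [abs_mul, abs_of_pos (pow_pos hy0 i)]
  -- coefficient bounds
  have h5 : ∀ i ∈ Finset.Ico (j+1) (d+1),
      |(Q.coeff i : ℝ)| * y^i ≤ ((H:ℝ) * Cn * (d+1)^(i-(j+1))) * (y^(j+1) * y^(i-(j+1))) := by
    intro i hi
    simp only [Finset.mem_Ico] at hi
    have hb1 : ((Q.coeff i).natAbs : ℕ) ≤ H * (d+1).choose (i+1) := hQ ▸ aux_Qcoeff d P hPd i
    have hb2 : (d+1).choose (i+1) ≤ Cn * (d+1)^(i-(j+1)) := by
      have : i + 1 = (j+2) + (i - (j+1)) := by omega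
      rw [this, hCn]
      exact aux_choose_mul (d+1) (j+2) _
    have hb : |(Q.coeff i : ℝ)| ≤ (H:ℝ) * Cn * (d+1)^(i-(j+1)) := by
      have hn : ((Q.coeff i).natAbs : ℕ) ≤ H * (Cn * (d+1)^(i-(j+1))) :=
        le_trans hb1 (Nat.mul_le_mul_left _ hb2)
      rw [← Int.cast_abs, Int.abs_eq_natAbs, Int.cast_natCast]
      calc ((Q.coeff i).natAbs : ℝ) ≤ ((H * (Cn * (d+1)^(i-(j+1))) : ℕ) : ℝ) := Nat.cast_le.mpr hn
      _ = (H:ℝ) * Cn * (d+1)^(i-(j+1)) := by push_cast; ring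
    have hyi : y^i = y^(j+1) * y^(i-(j+1)) := by
      rw [← pow_add]
      congr 1
      omega
    rw [hyi]
    exact mul_le_mul_of_nonneg_right hb (le_of_lt (mul_pos (pow_pos hy0 _) (pow_pos hy0 _)))
  have h6 : y^j ≤ (H:ℝ) * Cn * y^(j+1) * ∑ m ∈ Finset.range (d - j), ((d+1) * y)^m := by
    refine le_trans (le_trans h4 (Finset.sum_le_sum h5)) (le_of_eq ?_)
    rw [Finset.sum_Ico_eq_sum_range]
    rw [Finset.mul_sum]
    refine Finset.sum_congr (by congr 1; omega) fun m hm => ?_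
    simp only [Nat.add_sub_cancel_left, show j + 1 + m - (j+1) = m from by omega]
    rw [mul_pow]
    ring
  -- geometric sum bound
  have hS : ∑ m ∈ Finset.range (d - j), (((d:ℝ)+1) * y)^m ≤ 2 := by
    rcases le_or_gt (d - j) 1 with h | h
    · interval_cases h' : (d - j) <;> simp
    · have hdj : j + 2 < d + 1 := by omega
      have hch : d + 1 ≤ Cn := hCn ▸ aux_le_choose (d+1) (j+2) (by omega) hdj
      have hr : ((d:ℝ)+1) * y ≤ 1/2 := by
        have h1 : ((d:ℝ)+1) ≤ (H:ℝ) * Cn := by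
          have : (d+1 : ℕ) ≤ H * Cn := le_trans hch (Nat.le_mul_of_pos_left _ (by omega))
          exact_mod_cast this
        nlinarith
      calc ∑ m ∈ Finset.range (d - j), (((d:ℝ)+1) * y)^m
          ≤ ∑ m ∈ Finset.range (d - j), (1/2:ℝ)^m := by
            refine Finset.sum_le_sum fun m _ => ?_
            exact pow_le_pow_left₀ (mul_nonneg (by positivity) hy0.le) hr m
      _ ≤ 2 := sum_geometric_two_le _
  have hfin : y^j ≤ 2 * (H:ℝ) * Cn * y * y^j := by
    calc y^j ≤ (H:ℝ) * Cn * y^(j+1) * ∑ m ∈ Finset.range (d - j), ((d+1) * y)^m := h6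
    _ ≤ (H:ℝ) * Cn * y^(j+1) * 2 := by
        refine mul_le_mul_of_nonneg_left hS ?_
        exact mul_nonneg (mul_nonneg (by positivity) (by positivity)) (le_of_lt (pow_pos hy0 _))
    _ = 2 * (H:ℝ) * Cn * y * y^j := by rw [pow_succ]; ring
  have : 2 * (H:ℝ) * Cn * y * y^j < 1 * y^j :=
    mul_lt_mul_of_pos_right hyD (pow_pos hy0 j)
  rw [one_mul] at this
  linarith
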